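/- Let D be a deterministic Büchi automaton with n states. Define the FDFA F whose leading automaton Q is D without acceptance, and whose progress DFA at state q consists of two copies of D starting at (q,0), moving to copy 1 upon visiting a D-accepting state and staying there, with accepting states Q × {1}. Then for every pair (u,v) ∈ Σ* × Σ⁺: (u,v) is accepted by F if and only if u·v^ω is accepted by D. Consequently F is saturated. -/

import Mathlib

open Classical

/-- `wpow v n` is the word `v` repeated `n` times. -/
def wpow {α : Type} (v : List α) : ℕ → List α
  | 0 => []
  | n + 1 => wpow v n ++ v

/-- The ultimately periodic infinite word `u·v^ω` (meaningful when `v ≠ []`). -/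
def upWord {α : Type} [Inhabited α] (u v : List α) : ℕ → α := fun n =>
  if n < u.length then u.getD n default
  else v.getD ((n - u.length) % v.length) default

/-- `l` is a prefix of the infinite word `w`. -/
def prefOf {α : Type} [Inhabited α] (l : List α) (w : ℕ → α) : Prop :=
  ∀ i < l.length, w i = l.getD i default

/-- A complete deterministic automaton (no acceptance condition). -/
structure DetAuto (α : Type) : Type 1 where
  State : Type
  [fin : Fintype State]
  init : State
  step : State → α → State

attribute [instance] DetAuto.fin

namespace DetAuto

variable {α : Type}

/-- The state reached from `q` after reading the finite word `w`. -/
def run (A : DetAuto α) (q : A.State) (w : List α) : A.State := w.foldl A.step q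

/-- The state reached from the initial state after reading `w`. -/
def eval (A : DetAuto α) (w : List α) : A.State := A.run A.init w

/-- The (infinite) run of `A` on an infinite word `w`. -/
def runSeq (A : DetAuto α) (w : ℕ → α) : ℕ → A.State
  | 0 => A.init
  | n + 1 => A.step (A.runSeq w n) (w n)

lemma exists_rep (A : DetAuto α) (u v : List α) :
    ∃ i, ∃ j, 1 ≤ j ∧ A.eval (u ++ wpow v i) = A.eval (u ++ wpow v (i + j)) := by
  obtain ⟨a, b, hab, hfab⟩ :=
    Finite.exists_ne_map_eq_of_infinite (fun n : ℕ => A.eval (u ++ wpow v n))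
  rcases Nat.lt_or_gt_of_ne hab with h | h
  · exact ⟨a, b - a, by omega, by rw [Nat.add_sub_cancel' h.le]; exact hfab⟩
  · exact ⟨b, a - b, by omega, by rw [Nat.add_sub_cancel' h.le]; exact hfab.symm⟩

/-- The least `i` in the normalization of `(u,v)` w.r.t. `A`. -/
noncomputable def normI (A : DetAuto α) (u v : List α) : ℕ :=
  Nat.find (A.exists_rep u v)

lemma normI_spec (A : DetAuto α) (u v : List α) :
    ∃ j, 1 ≤ j ∧ A.eval (u ++ wpow v (A.normI u v))
      = A.eval (u ++ wpow v (A.normI u v + j)) :=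
  Nat.find_spec (A.exists_rep u v)

/-- The least `j` in the normalization of `(u,v)` w.r.t. `A`. -/
noncomputable def normJ (A : DetAuto α) (u v : List α) : ℕ :=
  Nat.find (A.normI_spec u v)

/-- The normalization `(x, y) = (u·v^i, v^j)` of `(u,v)` w.r.t. `A`. -/
noncomputable def normalize (A : DetAuto α) (u v : List α) : List α × List α :=
  (u ++ wpow v (A.normI u v), wpow v (A.normJ u v))

/-- The product automaton. -/
def prod (A B : DetAuto α) : DetAuto α where
  State := A.State × B.State
  init := (A.init, B.init)
  step := fun p σ => (A.step p.1 σ, B.step p.2 σ)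

end DetAuto

/-- A family of DFAs: a leading automaton and a progress DFA for each of its states. -/
structure FDFA (α : Type) : Type 1 where
  leading : DetAuto α
  pState : leading.State → Type
  [pFin : ∀ q, Fintype (pState q)]
  pInit : ∀ q, pState q
  pStep : ∀ q, pState q → α → pState q
  pAcc : ∀ q, Set (pState q)

attribute [instance] FDFA.pFin

namespace FDFA

variable {α : Type}

/-- The progress DFA at state `q` accepts the finite word `y`. -/
def progAccept (F : FDFA α) (q : F.leading.State) (y : List α) : Prop :=
  y.foldl (F.pStep q) (F.pInit q) ∈ F.pAcc q

/-- `F` accepts the pair `(u, v)`: with `(x,y)` the normalization of `(u,v)` w.r.t.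
the leading automaton, the progress DFA at the state reached on `x` accepts `y`. -/
noncomputable def Accept (F : FDFA α) (u v : List α) : Prop :=
  F.progAccept (F.leading.eval (F.leading.normalize u v).1) (F.leading.normalize u v).2

/-- `F` is saturated: acceptance of `(u,v)` depends only on the infinite word `u·v^ω`. -/
def Saturated [Inhabited α] (F : FDFA α) : Prop :=
  ∀ u v u' v' : List α, v ≠ [] → v' ≠ [] → upWord u v = upWord u' v' →
    (F.Accept u v ↔ F.Accept u' v')

/-- The complement FDFA: same structure, complemented accepting states. -/
def compl (F : FDFA α) : FDFA α :=
  { F with pAcc := fun q => (F.pAcc q)ᶜ }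

end FDFA

/-- Büchi acceptance: the run visits `acc` infinitely often. -/
def buchiAccepts {α : Type} (A : DetAuto α) (acc : Set A.State) (w : ℕ → α) : Prop :=
  {n | A.runSeq w n ∈ acc}.Infinite

/-- The FDFA associated with a deterministic Büchi automaton: the leading automaton is
`A`; the progress DFA at `q` consists of two copies of `A` starting at `(q, false)`,
moving permanently to the second copy upon visiting an accepting state; its accepting
states are those in the second copy. -/
noncomputable def dbaToFdfa {α : Type} (A : DetAuto α) (acc : Set A.State) : FDFA α where
  leading := A
  pState := fun _ => A.State × Bool
  pInit := fun q => (q, false)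
  pStep := fun _ p σ =>
    (A.step p.1 σ, if A.step p.1 σ ∈ acc then true else p.2)
  pAcc := fun _ => {p | p.2 = true}

section Aux

variable {α : Type}

lemma wpow_add (v : List α) (m n : ℕ) : wpow v (m + n) = wpow v m ++ wpow v n := by
  induction n with
  | zero => simp [wpow]
  | succ n ih => rw [← Nat.add_assoc, wpow, wpow, ih, List.append_assoc]

lemma wpow_length (v : List α) (n : ℕ) : (wpow v n).length = n * v.length := by
  induction n with
  | zero => simp [wpow]
  | succ n ih => simp [wpow, ih, Nat.succ_mul]

lemma wpow_getD [Inhabited α] (v : List α) (n k : ℕ) (h : k < n * v.length) :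
    (wpow v n).getD k default = v.getD (k % v.length) default := by
  induction n with
  | zero => simp at h
  | succ n ih =>
    rw [wpow]
    rcases lt_or_ge k (n * v.length) with h' | h'
    · rw [List.getD_append _ _ _ _ (by rw [wpow_length]; exact h'), ih h']
    · obtain ⟨r, rfl⟩ : ∃ r, k = n * v.length + r := ⟨k - n * v.length, by omega⟩
      have hr : r < v.length := by
        have h2 : (n + 1) * v.length = n * v.length + v.length := by ring
        omega
      rw [List.getD_append_right _ _ _ _ (by rw [wpow_length]; omega), wpow_length]
      congr 1
      rw [Nat.add_sub_cancel_left, Nat.mul_comm n v.length, Nat.mul_add_mod,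
        Nat.mod_eq_of_lt hr]

lemma DetAuto.run_append (A : DetAuto α) (q : A.State) (w1 w2 : List α) :
    A.run q (w1 ++ w2) = A.run (A.run q w1) w2 := by
  simp [DetAuto.run, List.foldl_append]

lemma DetAuto.runSeq_eq_run (A : DetAuto α) (w : ℕ → α) (n : ℕ) :
    A.runSeq w n = A.run A.init ((List.range n).map w) := by
  induction n with
  | zero => rfl
  | succ n ih =>
    rw [DetAuto.runSeq, ih, List.range_succ, List.map_append, DetAuto.run_append]
    rfl

lemma map_range_eq [Inhabited α] (f : ℕ → α) (m : ℕ) (l : List α) (hlen : l.length = m)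
    (h : ∀ k < m, f k = l.getD k default) : (List.range m).map f = l := by
  subst hlen
  apply List.ext_getElem (by simp)
  intro k h1 h2
  simp only [List.getElem_map, List.getElem_range]
  rw [← List.getD_eq_getElem l default h2]
  exact h k h2

lemma map_range_add (f : ℕ → α) (a b : ℕ) :
    (List.range (a + b)).map f
      = (List.range a).map f ++ (List.range b).map (fun s => f (a + s)) := by
  rw [List.range_add, List.map_append, List.map_map]
  rfl

lemma fold2_fst (A : DetAuto α) (acc : Set A.State) (y : List α) (p : A.State) (b : Bool) :
    (y.foldl (fun p σ => (A.step p.1 σ, if A.step p.1 σ ∈ acc then true else p.2))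
      (p, b)).1 = A.run p y := by
  induction y generalizing p b with
  | nil => rfl
  | cons σ y ih =>
    rw [List.foldl_cons]
    exact ih (A.step p σ) _

lemma fold2_snd (A : DetAuto α) (acc : Set A.State) (y : List α) (p : A.State) (b : Bool) :
    ((y.foldl (fun p σ => (A.step p.1 σ, if A.step p.1 σ ∈ acc then true else p.2))
        (p, b)).2 = true
      ↔ b = true ∨ ∃ m, 1 ≤ m ∧ m ≤ y.length ∧ A.run p (y.take m) ∈ acc) := by
  induction y generalizing p b with
  | nil =>
    simp only [List.foldl_nil, List.length_nil]
    constructor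
    · exact fun h => Or.inl h
    · rintro (h | ⟨m, hm1, hm2, _⟩)
      · exact h
      · omega
  | cons σ y ih =>
    rw [List.foldl_cons]
    show ((y.foldl _ (A.step p σ, if A.step p σ ∈ acc then true else b)).2 = true ↔ _)
    rw [ih]
    constructor
    · rintro (hb | ⟨m, hm1, hm2, hacc⟩)
      · by_cases h : A.step p σ ∈ acc
        · refine Or.inr ⟨1, le_refl 1, by simp, ?_⟩
          simpa [DetAuto.run] using h
        · rw [if_neg h] at hb
          exact Or.inl hb
      · refine Or.inr ⟨m + 1, by omega, by simp; omega, ?_⟩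
        rw [List.take_succ_cons]
        show A.run (A.step p σ) (y.take m) ∈ acc
        exact hacc
    · rintro (hb | ⟨m, hm1, hm2, hacc⟩)
      · left; subst hb; split <;> rfl
      · obtain ⟨m', rfl⟩ : ∃ m', m = m' + 1 := ⟨m - 1, by omega⟩
        rw [List.take_succ_cons] at hacc
        replace hacc : A.run (A.step p σ) (y.take m') ∈ acc := hacc
        rcases Nat.eq_zero_or_pos m' with rfl | hm'
        · left
          simp only [List.take_zero, DetAuto.run, List.foldl_nil] at hacc
          rw [if_pos hacc]
        · right
          exact ⟨m', hm', by simpa using hm2, hacc⟩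

end Aux

/-- The FDFA built from a deterministic Büchi automaton `(A, acc)`
accepts `(u,v)` iff `A` Büchi-accepts `u·v^ω`; consequently it is saturated. -/
theorem dba_to_fdfa_correct {α : Type} [Inhabited α] (A : DetAuto α)
    (acc : Set A.State) :
    (∀ u v : List α, v ≠ [] →
      ((dbaToFdfa A acc).Accept u v ↔ buchiAccepts A acc (upWord u v))) ∧
    (dbaToFdfa A acc).Saturated := by
  have key : ∀ u v : List α, v ≠ [] →
      ((dbaToFdfa A acc).Accept u v ↔ buchiAccepts A acc (upWord u v)) := by
    intro u v hv
    have hvlen : 1 ≤ v.length := List.length_pos_iff.mpr hv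
    obtain ⟨hj1, hjfix⟩ := Nat.find_spec (A.normI_spec u v)
    set i := A.normI u v with hi
    set j := A.normJ u v with hjdef
    set x := u ++ wpow v i with hxdef
    set y := wpow v j with hydef
    set q := A.eval x with hqdef
    have hxlen : x.length = u.length + i * v.length := by
      simp [hxdef, wpow_length]
    have hylen : 1 ≤ y.length := by
      rw [hydef, wpow_length]
      exact Nat.one_le_iff_ne_zero.mpr (by positivity)
    have hloop : A.run q y = q := by
      rw [hqdef, DetAuto.eval, ← DetAuto.run_append]
      show A.run A.init (x ++ y) = A.eval x
      rw [hxdef, hydef, List.append_assoc, ← wpow_add]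
      exact hjfix.symm
    have hloopk : ∀ k, A.run q (wpow y k) = q := by
      intro k
      induction k with
      | zero => rfl
      | succ k ih => rw [wpow, DetAuto.run_append, ih, hloop]
    -- the first |x| letters of u·v^ω spell x
    have hpref : (List.range x.length).map (upWord u v) = x := by
      apply map_range_eq _ _ _ rfl
      intro k hk
      simp only [upWord]
      split
      · rename_i h
        rw [hxdef, List.getD_append _ _ _ _ h]
      · rename_i h
        push_neg at h
        rw [hxdef, List.getD_append_right _ _ _ _ h,
          wpow_getD v i _ (by omega)]
    -- subsequent letters are periodic with pattern y
    have hsuff : ∀ s, upWord u v (x.length + s) = y.getD (s % y.length) default := by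
      intro s
      have h1 : ¬ (x.length + s < u.length) := by omega
      simp only [upWord, if_neg h1]
      have h2 : x.length + s - u.length = i * v.length + s := by omega
      rw [h2, Nat.mul_comm, Nat.mul_add_mod]
      rw [hydef, wpow_getD v j _ (by
          rw [← wpow_length, ← hydef]
          exact Nat.mod_lt _ (by omega)),
        Nat.mod_mod_of_dvd s (by rw [wpow_length]; exact dvd_mul_left _ _)]
    have htake : ∀ m ≤ y.length,
        (List.range m).map (fun s => y.getD (s % y.length) default) = y.take m := by
      intro m hm
      apply map_range_eq _ _ _ (by simp [hm])
      intro k hk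
      rw [Nat.mod_eq_of_lt (by omega),
        List.getD_eq_getElem _ _ (by omega), List.getD_eq_getElem _ _ (by simp; omega),
        List.getElem_take]
    have hwpowy : ∀ k, (List.range (k * y.length)).map
        (fun s => y.getD (s % y.length) default) = wpow y k := by
      intro k
      induction k with
      | zero => simp [wpow]
      | succ k ih =>
        have : (k + 1) * y.length = k * y.length + y.length := by ring
        rw [this, map_range_add, ih, wpow]
        congr 1
        rw [List.map_congr_left (g := fun s => y.getD (s % y.length) default)
          (fun a _ => by rw [Nat.mul_comm, Nat.mul_add_mod]),
          htake y.length le_rfl, List.take_length]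
    have hrun : ∀ k m, m ≤ y.length →
        A.runSeq (upWord u v) (x.length + (k * y.length + m))
          = A.run q (y.take m) := by
      intro k m hm
      rw [DetAuto.runSeq_eq_run, map_range_add, DetAuto.run_append, hpref]
      rw [show A.run A.init x = q from rfl]
      rw [List.map_congr_left (g := fun s => y.getD (s % y.length) default)
        (fun a _ => hsuff a)]
      rw [map_range_add, DetAuto.run_append, hwpowy k, hloopk k]
      congr 1
      rw [← htake m hm]
      apply List.map_congr_left
      intro a _
      show y.getD ((k * y.length + a) % y.length) default = _
      rw [Nat.mul_comm, Nat.mul_add_mod]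
    -- characterization of FDFA acceptance
    have hchar : (dbaToFdfa A acc).Accept u v ↔
        ∃ m, 1 ≤ m ∧ m ≤ y.length ∧ A.run q (y.take m) ∈ acc := by
      show (y.foldl (fun p σ => (A.step p.1 σ, if A.step p.1 σ ∈ acc then true else p.2))
          (q, false)).2 = true ↔ _
      rw [fold2_snd]
      simp
    rw [hchar]
    constructor
    · rintro ⟨m, hm1, hm2, hacc⟩
      apply Set.infinite_of_injective_forall_mem
        (f := fun k : ℕ => x.length + (k * y.length + m))
      · intro a b hab
        simp only at hab
        have : a * y.length = b * y.length := by omega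
        exact Nat.eq_of_mul_eq_mul_right (by omega) this
      · intro k
        show A.runSeq (upWord u v) _ ∈ acc
        rw [hrun k m hm2]
        exact hacc
    · intro hbuchi
      obtain ⟨n, hn, hlt⟩ := hbuchi.exists_gt x.length
      have hdm := Nat.div_add_mod (n - x.length) y.length
      have hmlt : (n - x.length) % y.length < y.length := Nat.mod_lt _ (by omega)
      have heq : x.length + ((n - x.length) / y.length * y.length
          + (n - x.length) % y.length) = n := by
        rw [Nat.mul_comm]
        omega
      set m := (n - x.length) % y.length with hm
      have h5 : A.run q (y.take m) ∈ acc := by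
        rw [← hrun _ _ hmlt.le, heq]
        exact hn
      rcases Nat.eq_zero_or_pos m with hm0 | hm0
      · refine ⟨y.length, hylen, le_rfl, ?_⟩
        rw [List.take_length, hloop]
        rw [hm0] at h5
        simpa [DetAuto.run] using h5
      · exact ⟨m, hm0, hmlt.le, h5⟩
  refine ⟨key, ?_⟩
  intro u v u' v' hv hv' hw
  rw [key u v hv, key u' v' hv', hw]
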